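/- arXiv:1501.01146 — 4 statements merged into one kernel-verified Lean document; each statement's English description precedes it below -/
import Mathlib

section
/- Let Λ = {Λ_i ∈ B(X₂, Y_i)} be a qg-Riesz basis for X₂^* and Θ = {Θ_i ∈ B(X₁^*, Y_i^*)} a pg-Riesz basis for X₁. If m = {m_i} satisfies 0 < inf_i |m_i| ≤ sup_i |m_i| < ∞, then the multiplier M_{m,Λ,Θ} : X₁^* → X₂^* is invertible, with inverse M_{1/m, ~Θ, ~Λ} where ~Λ and ~Θ are the dual Riesz bases of Λ and Θ. -/
open NormedSpace Filter

/-- The Banach-space adjoint (dual map) of a continuous linear map. -/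
noncomputable def opAdj {X Y : Type*} [NormedAddCommGroup X] [NormedSpace ℝ X]
    [NormedAddCommGroup Y] [NormedSpace ℝ Y] (T : X →L[ℝ] Y) :
    StrongDual ℝ Y →L[ℝ] StrongDual ℝ X :=
  (ContinuousLinearMap.compL ℝ X Y ℝ).flip T


section Helpers
open Filter NormedSpace

lemma aux_bounded_partial_sums {E : Type*} [NormedAddCommGroup E] {u : ℕ → E}
    (hu : Summable u) : ∃ C, 0 ≤ C ∧ ∀ s : Finset ℕ, ‖∑ i ∈ s, u i‖ ≤ C := by
  obtain ⟨L, hL⟩ := hu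
  have h2 : Tendsto (fun s : Finset ℕ => ∑ i ∈ s, u i) atTop (nhds L) := hL
  have h1 : ∀ᶠ s : Finset ℕ in atTop, ‖∑ i ∈ s, u i - L‖ ≤ 1 := by
    simpa [dist_eq_norm] using h2.eventually (Metric.closedBall_mem_nhds L one_pos)
  obtain ⟨s₀, hs₀⟩ := eventually_atTop.mp h1
  refine ⟨‖L‖ + 1 + ∑ i ∈ s₀, ‖u i‖, by positivity, fun s => ?_⟩
  have hsplit : ∑ i ∈ s ∪ s₀, u i = ∑ i ∈ s, u i + ∑ i ∈ s₀ \ s, u i := by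
    rw [← Finset.sum_union Finset.disjoint_sdiff, Finset.union_sdiff_self_eq_union]
  have : ∑ i ∈ s, u i = (∑ i ∈ s ∪ s₀, u i - L) + L - ∑ i ∈ s₀ \ s, u i := by
    rw [hsplit]; abel
  rw [this]
  have hb1 : ‖∑ i ∈ s ∪ s₀, u i - L‖ ≤ 1 := hs₀ _ Finset.subset_union_right
  have hb2 : ‖∑ i ∈ s₀ \ s, u i‖ ≤ ∑ i ∈ s₀, ‖u i‖ :=
    le_trans (norm_sum_le _ _) (Finset.sum_le_sum_of_subset_of_nonneg (Finset.sdiff_subset)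
      (fun _ _ _ => norm_nonneg _))
  calc ‖(∑ i ∈ s ∪ s₀, u i - L) + L - ∑ i ∈ s₀ \ s, u i‖
      ≤ ‖(∑ i ∈ s ∪ s₀, u i - L) + L‖ + ‖∑ i ∈ s₀ \ s, u i‖ := norm_sub_le _ _
    _ ≤ (‖∑ i ∈ s ∪ s₀, u i - L‖ + ‖L‖) + ∑ i ∈ s₀, ‖u i‖ :=
        add_le_add (norm_add_le _ _) hb2
    _ ≤ (1 + ‖L‖) + ∑ i ∈ s₀, ‖u i‖ := by gcongr
    _ = ‖L‖ + 1 + ∑ i ∈ s₀, ‖u i‖ := by ring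

lemma aux_summable_of_riesz {E : Type*} [NormedAddCommGroup E] [CompleteSpace E]
    {q : ℝ} (hq : 0 < q) (u : ℕ → E) (c : ℕ → ℝ) (hc : ∀ i, 0 ≤ c i) (hcs : Summable c)
    {B : ℝ} (hB : 0 < B)
    (hbd : ∀ s : Finset ℕ, ‖∑ i ∈ s, u i‖ ≤ B * (∑ i ∈ s, c i) ^ (1/q)) :
    Summable u := by
  rw [summable_iff_vanishing]
  intro e he
  obtain ⟨ε, hε, hball⟩ := Metric.mem_nhds_iff.mp he
  have hδ : (0:ℝ) < (ε / B) ^ q := Real.rpow_pos_of_pos (div_pos hε hB) q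
  obtain ⟨s₀, hs₀⟩ := (summable_iff_vanishing.mp hcs) (Metric.ball 0 ((ε / B) ^ q))
    (Metric.ball_mem_nhds 0 hδ)
  refine ⟨s₀, fun t ht => ?_⟩
  apply hball
  simp only [Metric.mem_ball, dist_zero_right]
  have hct : ∑ i ∈ t, c i < (ε / B) ^ q := by
    have := hs₀ t ht
    simpa [Real.dist_eq, abs_of_nonneg (Finset.sum_nonneg fun i _ => hc i)] using this
  calc ‖∑ i ∈ t, u i‖ ≤ B * (∑ i ∈ t, c i) ^ (1/q) := hbd t
    _ < B * ((ε / B) ^ q) ^ (1/q) := by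
        have h := Real.rpow_lt_rpow (Finset.sum_nonneg fun i _ => hc i) hct
          (by positivity : (0:ℝ) < 1/q)
        exact (mul_lt_mul_iff_right₀ hB).mpr h
    _ = ε := by
        rw [← Real.rpow_mul (le_of_lt (div_pos hε hB)), mul_one_div_cancel hq.ne',
          Real.rpow_one]
        field_simp

lemma aux_rpow_le {q S R : ℝ} (hq : 0 < q) (hS : 0 ≤ S) (h : S ^ (1/q) ≤ R) : S ≤ R ^ q := by
  have h2 := Real.rpow_le_rpow (Real.rpow_nonneg hS _) h hq.le
  rwa [← Real.rpow_mul hS, one_div_mul_cancel hq.ne', Real.rpow_one] at h2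

lemma aux_self_bound {p q S D : ℝ} (hq : 0 < q) (hpq : 1/p + 1/q = 1)
    (hS : 0 ≤ S) (hD : 0 ≤ D) (h : S ≤ D * S ^ (1/p)) : S ≤ D ^ q := by
  rcases eq_or_lt_of_le hS with h0 | h0
  · rw [← h0]; positivity
  · apply aux_rpow_le hq hS
    have hsplit : S = S ^ (1/p) * S ^ (1/q) := by
      rw [← Real.rpow_add h0, hpq, Real.rpow_one]
    have hp' : (0:ℝ) < S ^ (1/p) := Real.rpow_pos_of_pos h0 _
    have he : S ^ (1/q) = S / S ^ (1/p) := by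
      rw [eq_div_iff hp'.ne', mul_comm]; exact hsplit.symm
    have hd : S / S ^ (1/p) ≤ D := by
      rw [div_le_iff₀ hp']; exact h
    linarith [he ▸ hd]

end Helpers

set_option maxHeartbeats 2000000

/-- if `Λ` is a qg-Riesz basis for `X₂*`, `Θ` a pg-Riesz basis for `X₁`
and `0 < inf |mᵢ| ≤ sup |mᵢ| < ∞`, then `M_{m,Λ,Θ}` is invertible with inverse the
multiplier `M_{1/m,~Θ,~Λ}` built from the dual Riesz bases `~Λ, ~Θ`. -/
theorem multiplier_invertible
    {X₁ X₂ : Type*} [NormedAddCommGroup X₁] [NormedSpace ℝ X₁] [CompleteSpace X₁]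
    [NormedAddCommGroup X₂] [NormedSpace ℝ X₂] [CompleteSpace X₂]
    {Y : ℕ → Type*} [∀ i, NormedAddCommGroup (Y i)] [∀ i, NormedSpace ℝ (Y i)]
    [∀ i, CompleteSpace (Y i)]
    (hreflX₁ : Function.Surjective (inclusionInDoubleDual ℝ X₁))
    (hreflX₂ : Function.Surjective (inclusionInDoubleDual ℝ X₂))
    (hreflY : ∀ i, Function.Surjective (inclusionInDoubleDual ℝ (Y i)))
    (p q : ℝ) (hp : 1 < p) (hpq : 1 / p + 1 / q = 1)
    (Λ : ∀ i, X₂ →L[ℝ] Y i) (Θ : ∀ i, StrongDual ℝ X₁ →L[ℝ] StrongDual ℝ (Y i))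
    -- `Λ` is a qg-Riesz basis for `X₂*`
    (hΛcomplete : ∀ x : X₂, (∀ i, Λ i x = 0) → x = 0)
    (hΛriesz : ∃ A B : ℝ, 0 < A ∧ 0 < B ∧
      ∀ (s : Finset ℕ) (g : ∀ i, StrongDual ℝ (Y i)),
        A * (∑ i ∈ s, ‖g i‖ ^ q) ^ (1 / q) ≤ ‖∑ i ∈ s, opAdj (Λ i) (g i)‖ ∧
        ‖∑ i ∈ s, opAdj (Λ i) (g i)‖ ≤ B * (∑ i ∈ s, ‖g i‖ ^ q) ^ (1 / q))
    -- `Θ` is a pg-Riesz basis for `X₁`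
    (hΘcomplete : ∀ g : StrongDual ℝ X₁, (∀ i, Θ i g = 0) → g = 0)
    (hΘriesz : ∃ A B : ℝ, 0 < A ∧ 0 < B ∧
      ∀ (s : Finset ℕ) (h : ∀ i, StrongDual ℝ (StrongDual ℝ (Y i))),
        A * (∑ i ∈ s, ‖h i‖ ^ p) ^ (1 / p) ≤ ‖∑ i ∈ s, opAdj (Θ i) (h i)‖ ∧
        ‖∑ i ∈ s, opAdj (Θ i) (h i)‖ ≤ B * (∑ i ∈ s, ‖h i‖ ^ p) ^ (1 / p))
    -- the dual Riesz bases `~Λ` and `~Θ`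
    (Λd : ∀ i, StrongDual ℝ X₂ →L[ℝ] StrongDual ℝ (Y i)) (Θd : ∀ i, X₁ →L[ℝ] Y i)
    (hΛd : ∀ f : StrongDual ℝ X₂, Summable (fun i => opAdj (Λ i) (Λd i f)) ∧
      (∑' i, opAdj (Λ i) (Λd i f)) = f)
    (hΛbi : ∀ (k i : ℕ) (y : StrongDual ℝ (Y i)),
      Λd k (opAdj (Λ i) y) = if h : i = k then h ▸ y else 0)
    (hΘd : ∀ g : StrongDual ℝ X₁, Summable (fun k => opAdj (Θd k) (Θ k g)) ∧
      (∑' k, opAdj (Θd k) (Θ k g)) = g)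
    (hΘbi : ∀ (i k : ℕ) (y : StrongDual ℝ (Y k)),
      Θ i (opAdj (Θd k) y) = if h : k = i then h ▸ y else 0)
    -- the symbol `m`
    (m : ℕ → ℝ) (a b : ℝ) (ha : 0 < a)
    (hm : ∀ i, a ≤ |m i| ∧ |m i| ≤ b) :
    -- `M_{m,Λ,Θ}` is well defined and `M_{1/m,~Θ,~Λ}` is a two-sided inverse
    (∀ g : StrongDual ℝ X₁, Summable (fun i => m i • opAdj (Λ i) (Θ i g)) ∧
      Summable (fun k => (m k)⁻¹ •
        opAdj (Θd k) (Λd k (∑' i, m i • opAdj (Λ i) (Θ i g)))) ∧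
      (∑' k, (m k)⁻¹ •
        opAdj (Θd k) (Λd k (∑' i, m i • opAdj (Λ i) (Θ i g)))) = g) ∧
    (∀ f : StrongDual ℝ X₂, Summable (fun k => (m k)⁻¹ • opAdj (Θd k) (Λd k f)) ∧
      Summable (fun i => m i •
        opAdj (Λ i) (Θ i (∑' k, (m k)⁻¹ • opAdj (Θd k) (Λd k f)))) ∧
      (∑' i, m i •
        opAdj (Λ i) (Θ i (∑' k, (m k)⁻¹ • opAdj (Θd k) (Λd k f)))) = f) ∧
    -- in particular `M_{m,Λ,Θ}` is invertible
    Function.Bijective (fun g : StrongDual ℝ X₁ => ∑' i, m i • opAdj (Λ i) (Θ i g)) := by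
  classical
  -- exponent facts
  have hp0 : (0:ℝ) < p := lt_trans one_pos hp
  have h1p : 1/p < 1 := by rw [div_lt_one hp0]; exact hp
  have hinvq : (0:ℝ) < 1/q := by linarith
  have hq0 : (0:ℝ) < q := by
    by_contra hcon
    push_neg at hcon
    have : 1/q ≤ 0 := div_nonpos_of_nonneg_of_nonpos zero_le_one hcon
    linarith
  have e1 : p + q = p * q := by
    field_simp at hpq
    linarith
  have hq1 : (1:ℝ) < q := by nlinarith
  have hqp : (q - 1) * p = q := by linear_combination -e1
  have hpq2 : (p - 1) * q = p := by linear_combination -e1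
  have hCpq : Real.HolderConjugate p q := ⟨by simpa [one_div] using hpq, by linarith, by linarith⟩
  have hCqp : Real.HolderConjugate q p := hCpq.symm
  obtain ⟨AΛ, BΛ, hAΛ, hBΛ, hΛr⟩ := hΛriesz
  obtain ⟨AΘ, BΘ, hAΘ, hBΘ, hΘr⟩ := hΘriesz
  have hm0 : ∀ i, m i ≠ 0 := by
    intro i hcon
    have := (hm i).1
    rw [hcon, abs_zero] at this
    linarith
  -- Piece 1 : q-summability of ‖Θ i g‖
  have hΘnorm_sum : ∀ g : StrongDual ℝ X₁, Summable (fun i => ‖Θ i g‖ ^ q) := by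
    intro g
    apply summable_of_sum_le (c := (BΘ * ‖g‖) ^ q) (fun i => by positivity)
    intro s
    set h : ∀ i, StrongDual ℝ (StrongDual ℝ (Y i)) := fun i =>
      if hz : Θ i g = 0 then 0
      else ‖Θ i g‖ ^ (q-1) • Classical.choose (exists_dual_vector ℝ (Θ i g) (norm_ne_zero_iff.mpr hz)) with hh
    have hnorm : ∀ i, ‖h i‖ = ‖Θ i g‖ ^ (q-1) := by
      intro i
      by_cases hz : Θ i g = 0
      · simp [hh, hz, Real.zero_rpow (by linarith : q - 1 ≠ 0)]
        exact ContinuousLinearMap.opNorm_zero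
      · obtain ⟨hn1, _⟩ := Classical.choose_spec (exists_dual_vector ℝ (Θ i g) (norm_ne_zero_iff.mpr hz))
        simp [hh, hz, norm_smul, hn1, abs_of_nonneg (Real.rpow_nonneg (norm_nonneg _) _)]
        refine (@norm_smul ℝ (StrongDual ℝ (StrongDual ℝ (Y i))) _ _ _ NormedSpace.toNormSMulClass _ _).trans ?_
        rw [hn1, Real.norm_eq_abs, abs_of_nonneg (Real.rpow_nonneg (norm_nonneg _) _),
          mul_one]
    have happ : ∀ i, h i (Θ i g) = ‖Θ i g‖ ^ q := by
      intro i
      by_cases hz : Θ i g = 0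
      · simp [hh, hz, Real.zero_rpow hq0.ne']
      · obtain ⟨_, hn2⟩ := Classical.choose_spec (exists_dual_vector ℝ (Θ i g) (norm_ne_zero_iff.mpr hz))
        have hnz : ‖Θ i g‖ ≠ 0 := norm_ne_zero_iff.mpr hz
        have hn2' : (Classical.choose (exists_dual_vector ℝ (Θ i g) (norm_ne_zero_iff.mpr hz))) (Θ i g)
            = ‖Θ i g‖ := by exact_mod_cast hn2
        simp only [hh, dif_neg hz, ContinuousLinearMap.smul_apply, hn2', smul_eq_mul]
        rw [← Real.rpow_add_one hnz]
        ring_nf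
    have hsum1 : ∑ i ∈ s, ‖Θ i g‖ ^ q = (∑ i ∈ s, opAdj (Θ i) (h i)) g := by
      rw [ContinuousLinearMap.sum_apply]
      exact Finset.sum_congr rfl fun i _ => (happ i).symm
    have hhp : ∑ i ∈ s, ‖h i‖ ^ p = ∑ i ∈ s, ‖Θ i g‖ ^ q := by
      refine Finset.sum_congr rfl fun i _ => ?_
      rw [hnorm i, ← Real.rpow_mul (norm_nonneg _), hqp]
    have hfinal : ∑ i ∈ s, ‖Θ i g‖ ^ q
        ≤ (BΘ * ‖g‖) * (∑ i ∈ s, ‖Θ i g‖ ^ q) ^ (1/p) := by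
      calc ∑ i ∈ s, ‖Θ i g‖ ^ q
          = (∑ i ∈ s, opAdj (Θ i) (h i)) g := hsum1
        _ ≤ ‖(∑ i ∈ s, opAdj (Θ i) (h i)) g‖ := le_abs_self _
        _ ≤ ‖∑ i ∈ s, opAdj (Θ i) (h i)‖ * ‖g‖ := ContinuousLinearMap.le_opNorm _ g
        _ ≤ (BΘ * (∑ i ∈ s, ‖h i‖ ^ p) ^ (1/p)) * ‖g‖ := by
            gcongr
            exact (hΘr s h).2
        _ = (BΘ * ‖g‖) * (∑ i ∈ s, ‖h i‖ ^ p) ^ (1/p) := by ring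
        _ = (BΘ * ‖g‖) * (∑ i ∈ s, ‖Θ i g‖ ^ q) ^ (1/p) := by
            rw [hhp]
    exact aux_self_bound hq0 hpq
      (Finset.sum_nonneg fun i _ => Real.rpow_nonneg (norm_nonneg _) _)
      (by positivity) hfinal
  -- Piece 2 : summability of the multiplier series
  have hA : ∀ g : StrongDual ℝ X₁, Summable (fun i => m i • opAdj (Λ i) (Θ i g)) := by
    intro g
    apply aux_summable_of_riesz hq0 _ (fun i => ‖m i • Θ i g‖ ^ q)
      (fun i => by positivity) ?_ hBΛ ?_
    · refine Summable.of_nonneg_of_le (fun i => by positivity) (fun i => ?_)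
        ((hΘnorm_sum g).mul_left (b ^ q))
      rw [norm_smul, Real.norm_eq_abs,
        Real.mul_rpow (abs_nonneg _) (norm_nonneg _)]
      exact mul_le_mul_of_nonneg_right
        (Real.rpow_le_rpow (abs_nonneg _) (hm i).2 hq0.le) (by positivity)
    · intro s
      have heq : ∑ i ∈ s, m i • opAdj (Λ i) (Θ i g)
          = ∑ i ∈ s, opAdj (Λ i) (m i • Θ i g) := by
        refine Finset.sum_congr rfl fun i _ => ?_
        rw [map_smul]
      rw [heq]
      simpa using (hΛr s (fun i => m i • Θ i g)).2
  -- Piece 3 : q-summability of ‖Λd k f‖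
  have hΛd_sum : ∀ f : StrongDual ℝ X₂, Summable (fun k => ‖Λd k f‖ ^ q) := by
    intro f
    obtain ⟨C, hC0, hC⟩ := aux_bounded_partial_sums (hΛd f).1
    apply summable_of_sum_le (c := (C / AΛ) ^ q) (fun i => by positivity)
    intro s
    apply aux_rpow_le hq0
      (Finset.sum_nonneg fun i _ => Real.rpow_nonneg (norm_nonneg _) _)
    calc (∑ k ∈ s, ‖Λd k f‖ ^ q) ^ (1/q)
        ≤ ‖∑ k ∈ s, opAdj (Λ k) (Λd k f)‖ / AΛ := by
          rw [le_div_iff₀' hAΛ]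
          exact (hΛr s (fun k => Λd k f)).1
      _ ≤ C / AΛ := by gcongr; exact hC s
  -- Piece 4 : Banach-Steinhaus uniform bound for Θd
  obtain ⟨CΘ, hCΘ0, hCΘ⟩ : ∃ C, 0 ≤ C ∧ ∀ (s : Finset ℕ) (x : X₁), ‖x‖ ≤ 1 →
      ∑ k ∈ s, ‖Θd k x‖ ^ p ≤ C ^ p := by
    set F : (Finset ℕ × {x : X₁ // ‖x‖ ≤ 1}) → (StrongDual ℝ X₁ →L[ℝ] ℝ) := fun z =>
      ∑ k ∈ z.1, opAdj (Θ k) (inclusionInDoubleDual ℝ (Y k) (Θd k z.2.1)) with hF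
    have hptws : ∀ g : StrongDual ℝ X₁, ∃ C, ∀ z, ‖F z g‖ ≤ C := by
      intro g
      obtain ⟨C, hC0, hC⟩ := aux_bounded_partial_sums (hΘd g).1
      refine ⟨C, fun z => ?_⟩
      have hev : F z g = (∑ k ∈ z.1, opAdj (Θd k) (Θ k g)) z.2.1 := by
        rw [hF]
        simp only [ContinuousLinearMap.sum_apply]
        exact Finset.sum_congr rfl fun k _ => rfl
      rw [hev]
      calc ‖(∑ k ∈ z.1, opAdj (Θd k) (Θ k g)) z.2.1‖
          ≤ ‖∑ k ∈ z.1, opAdj (Θd k) (Θ k g)‖ * ‖z.2.1‖ :=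
            ContinuousLinearMap.le_opNorm _ _
        _ ≤ C * 1 := mul_le_mul (hC z.1) z.2.2 (norm_nonneg _) hC0
        _ = C := mul_one C
    obtain ⟨C', hC'⟩ := banach_steinhaus hptws
    refine ⟨max C' 0 / AΘ, by positivity, fun s x hx => ?_⟩
    apply aux_rpow_le hp0
      (Finset.sum_nonneg fun i _ => Real.rpow_nonneg (norm_nonneg _) _)
    rw [le_div_iff₀' hAΘ]
    have hle := (hΘr s (fun k => inclusionInDoubleDual ℝ (Y k) (Θd k x))).1
    have hnormi : ∀ k, ‖inclusionInDoubleDual ℝ (Y k) (Θd k x)‖ = ‖Θd k x‖ :=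
      fun k => (inclusionInDoubleDualLi ℝ (E := Y k)).norm_map (Θd k x)
    simp only [hnormi] at hle
    refine le_trans hle (le_trans (hC' (s, ⟨x, hx⟩)) (le_max_left _ _))
  -- Piece 5 : the dual-side upper Riesz bound
  have hE4 : ∀ (s : Finset ℕ) (y : ∀ k, StrongDual ℝ (Y k)),
      ‖∑ k ∈ s, opAdj (Θd k) (y k)‖
        ≤ (max CΘ 1) * (∑ k ∈ s, ‖y k‖ ^ q) ^ (1/q) := by
    intro s y
    apply ContinuousLinearMap.opNorm_le_of_unit_norm (by positivity)
    intro x hx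
    have hx1 : ‖x‖ ≤ 1 := le_of_eq hx
    calc ‖(∑ k ∈ s, opAdj (Θd k) (y k)) x‖
        = ‖∑ k ∈ s, (y k) (Θd k x)‖ := by
          rw [ContinuousLinearMap.sum_apply]; rfl
      _ ≤ ∑ k ∈ s, ‖y k‖ * ‖Θd k x‖ := by
          refine le_trans (norm_sum_le _ _) (Finset.sum_le_sum fun k _ => ?_)
          exact (y k).le_opNorm _
      _ ≤ (∑ k ∈ s, ‖y k‖ ^ q) ^ (1/q) * (∑ k ∈ s, ‖Θd k x‖ ^ p) ^ (1/p) :=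
          Real.inner_le_Lp_mul_Lq_of_nonneg s hCqp (fun k _ => norm_nonneg _)
            (fun k _ => norm_nonneg _)
      _ ≤ (∑ k ∈ s, ‖y k‖ ^ q) ^ (1/q) * (CΘ ^ p) ^ (1/p) :=
          mul_le_mul_of_nonneg_left
            (Real.rpow_le_rpow (Finset.sum_nonneg fun k _ => Real.rpow_nonneg
              (norm_nonneg _) _) (hCΘ s x hx1) (by positivity))
            (Real.rpow_nonneg (Finset.sum_nonneg fun k _ => Real.rpow_nonneg
              (norm_nonneg _) _) _)
      _ ≤ (∑ k ∈ s, ‖y k‖ ^ q) ^ (1/q) * (max CΘ 1) := by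
          refine mul_le_mul_of_nonneg_left ?_
            (Real.rpow_nonneg (Finset.sum_nonneg fun k _ => Real.rpow_nonneg
              (norm_nonneg _) _) _)
          rw [← Real.rpow_mul hCΘ0, mul_one_div_cancel hp0.ne', Real.rpow_one]
          exact le_max_left _ _
      _ = (max CΘ 1) * (∑ k ∈ s, ‖y k‖ ^ q) ^ (1/q) := mul_comm _ _
  -- Piece 6 : summability of the inverse multiplier series
  have hB : ∀ f : StrongDual ℝ X₂, Summable (fun k => (m k)⁻¹ • opAdj (Θd k) (Λd k f)) := by
    intro f
    apply aux_summable_of_riesz hq0 _ (fun k => ‖(m k)⁻¹ • Λd k f‖ ^ q)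
      (fun k => by positivity) ?_ (lt_of_lt_of_le one_pos (le_max_right CΘ 1)) ?_
    · refine Summable.of_nonneg_of_le (fun k => by positivity) (fun k => ?_)
        ((hΛd_sum f).mul_left (a⁻¹ ^ q))
      rw [norm_smul, Real.norm_eq_abs, abs_inv,
        Real.mul_rpow (by positivity) (norm_nonneg _)]
      refine mul_le_mul_of_nonneg_right
        (Real.rpow_le_rpow (by positivity) ?_ hq0.le) (by positivity)
      exact inv_anti₀ ha (hm k).1
    · intro s
      have heq : ∑ k ∈ s, (m k)⁻¹ • opAdj (Θd k) (Λd k f)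
          = ∑ k ∈ s, opAdj (Θd k) ((m k)⁻¹ • Λd k f) := by
        refine Finset.sum_congr rfl fun k _ => ?_
        rw [map_smul]
      rw [heq]
      exact hE4 s (fun k => (m k)⁻¹ • Λd k f)
  -- the algebraic identities
  have claim1 : ∀ g : StrongDual ℝ X₁, Summable (fun i => m i • opAdj (Λ i) (Θ i g)) ∧
      Summable (fun k => (m k)⁻¹ •
        opAdj (Θd k) (Λd k (∑' i, m i • opAdj (Λ i) (Θ i g)))) ∧
      (∑' k, (m k)⁻¹ •
        opAdj (Θd k) (Λd k (∑' i, m i • opAdj (Λ i) (Θ i g)))) = g := by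
    intro g
    have hTgk : ∀ k, Λd k (∑' i, m i • opAdj (Λ i) (Θ i g)) = m k • Θ k g := by
      intro k
      have h1 : HasSum (fun i => Λd k (m i • opAdj (Λ i) (Θ i g)))
          (Λd k (∑' i, m i • opAdj (Λ i) (Θ i g))) := (hA g).hasSum.mapL (Λd k)
      rw [← h1.tsum_eq]
      rw [tsum_eq_single k]
      · rw [map_smul, hΛbi k k]
        simp
      · intro i hik
        rw [map_smul, hΛbi k i, dif_neg hik, smul_zero]
    have hterm : ∀ k, (m k)⁻¹ •
        opAdj (Θd k) (Λd k (∑' i, m i • opAdj (Λ i) (Θ i g)))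
          = opAdj (Θd k) (Θ k g) := by
      intro k
      rw [hTgk k, map_smul, smul_smul, inv_mul_cancel₀ (hm0 k), one_smul]
    refine ⟨hA g, ?_, ?_⟩
    · exact (hΘd g).1.congr fun k => (hterm k).symm
    · rw [tsum_congr hterm]
      exact (hΘd g).2
  have claim2 : ∀ f : StrongDual ℝ X₂,
      Summable (fun k => (m k)⁻¹ • opAdj (Θd k) (Λd k f)) ∧
      Summable (fun i => m i •
        opAdj (Λ i) (Θ i (∑' k, (m k)⁻¹ • opAdj (Θd k) (Λd k f)))) ∧
      (∑' i, m i •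
        opAdj (Λ i) (Θ i (∑' k, (m k)⁻¹ • opAdj (Θd k) (Λd k f)))) = f := by
    intro f
    have hSfi : ∀ i, Θ i (∑' k, (m k)⁻¹ • opAdj (Θd k) (Λd k f))
        = (m i)⁻¹ • Λd i f := by
      intro i
      have h1 : HasSum (fun k => Θ i ((m k)⁻¹ • opAdj (Θd k) (Λd k f)))
          (Θ i (∑' k, (m k)⁻¹ • opAdj (Θd k) (Λd k f))) := (hB f).hasSum.mapL (Θ i)
      rw [← h1.tsum_eq]
      rw [tsum_eq_single i]
      · rw [map_smul, hΘbi i i]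
        simp
      · intro k hki
        rw [map_smul, hΘbi i k, dif_neg hki, smul_zero]
    have hterm : ∀ i, m i •
        opAdj (Λ i) (Θ i (∑' k, (m k)⁻¹ • opAdj (Θd k) (Λd k f)))
          = opAdj (Λ i) (Λd i f) := by
      intro i
      rw [hSfi i, map_smul, smul_smul, mul_inv_cancel₀ (hm0 i), one_smul]
    refine ⟨hB f, ?_, ?_⟩
    · exact (hΛd f).1.congr fun i => (hterm i).symm
    · rw [tsum_congr hterm]
      exact (hΛd f).2
  refine ⟨claim1, claim2, ?_, ?_⟩
  · intro g₁ g₂ hgg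
    have h1 := (claim1 g₁).2.2
    have h2 := (claim1 g₂).2.2
    simp only at hgg
    rw [← h1, ← h2, hgg]
  · intro f
    exact ⟨∑' k, (m k)⁻¹ • opAdj (Θd k) (Λd k f), (claim2 f).2.2⟩
end

section
/- Let Λ be a pg-Bessel sequence for X₂ with bound B_Λ and Θ a qg-Bessel sequence for X₁^* with bound B_Θ, and fix p₁, q₁ > 1 with 1/p₁ + 1/q₁ = 1. If m, m^(n) ∈ ℓ^∞ with ‖m^(n) − m‖_{p₁} → 0, then ‖M_{m^(n),Λ,Θ} − M_{m,Λ,Θ}‖ → 0 as n → ∞; in fact ‖M_{m^(n),Λ,Θ} − M_{m,Λ,Θ}‖ ≤ B_Λ B_Θ ‖m^(n) − m‖_{p₁}. -/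
open NormedSpace Filter

section Aux

variable {X₁ X₂ : Type*} [NormedAddCommGroup X₁] [NormedSpace ℝ X₁]
    [NormedAddCommGroup X₂] [NormedSpace ℝ X₂]
    {Y : ℕ → Type*} [∀ i, NormedAddCommGroup (Y i)] [∀ i, NormedSpace ℝ (Y i)]

/-- Finite-sum estimate for multiplier partial sums. -/
lemma multiplier_finsum_bound
    {p q : ℝ} (hpq : p.HolderConjugate q)
    (Λ : ∀ i, X₂ →L[ℝ] Y i) (Θ : ∀ i, StrongDual ℝ X₁ →L[ℝ] StrongDual ℝ (Y i))
    {BΛ : ℝ} (hBΛ : 0 ≤ BΛ)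
    (hΛ : ∀ x : X₂, Summable (fun i => ‖Λ i x‖ ^ p) ∧
      (∑' i, ‖Λ i x‖ ^ p) ^ (1 / p) ≤ BΛ * ‖x‖)
    (g : StrongDual ℝ X₁) (c : ℕ → ℝ) {M : ℝ} (hM : ∀ i, |c i| ≤ M)
    (t : Finset ℕ) :
    ‖∑ i ∈ t, c i • opAdj (Λ i) (Θ i g)‖ ≤
      M * BΛ * (∑ i ∈ t, ‖Θ i g‖ ^ q) ^ (1 / q) := by
  have hM0 : 0 ≤ M := (abs_nonneg _).trans (hM 0)
  have hp0 : 0 < p := hpq.pos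
  have hq0 : 0 < q := hpq.symm.pos
  have hΘnn : (0:ℝ) ≤ (∑ i ∈ t, ‖Θ i g‖ ^ q) ^ (1 / q) :=
    Real.rpow_nonneg
      (Finset.sum_nonneg fun i _ => Real.rpow_nonneg (norm_nonneg _) _) _
  refine ContinuousLinearMap.opNorm_le_bound _ (by positivity) fun x => ?_
  have happ : ∀ i, (opAdj (Λ i) (Θ i g)) x = (Θ i g) (Λ i x) := fun i => rfl
  calc ‖(∑ i ∈ t, c i • opAdj (Λ i) (Θ i g)) x‖
      = ‖∑ i ∈ t, c i * (Θ i g) (Λ i x)‖ := by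
        simp only [ContinuousLinearMap.sum_apply, ContinuousLinearMap.smul_apply, happ,
          smul_eq_mul]
    _ ≤ ∑ i ∈ t, ‖c i * (Θ i g) (Λ i x)‖ := norm_sum_le _ _
    _ ≤ ∑ i ∈ t, M * (‖Λ i x‖ * ‖Θ i g‖) := by
        refine Finset.sum_le_sum fun i _ => ?_
        rw [norm_mul]
        have h1 : ‖(Θ i g) (Λ i x)‖ ≤ ‖Θ i g‖ * ‖Λ i x‖ := (Θ i g).le_opNorm _
        calc ‖c i‖ * ‖(Θ i g) (Λ i x)‖
            ≤ M * (‖Θ i g‖ * ‖Λ i x‖) := by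
              refine mul_le_mul ?_ h1 (norm_nonneg _) hM0
              simpa [Real.norm_eq_abs] using hM i
          _ = M * (‖Λ i x‖ * ‖Θ i g‖) := by ring
    _ = M * ∑ i ∈ t, ‖Λ i x‖ * ‖Θ i g‖ := by rw [Finset.mul_sum]
    _ ≤ M * ((∑ i ∈ t, ‖Λ i x‖ ^ p) ^ (1 / p) * (∑ i ∈ t, ‖Θ i g‖ ^ q) ^ (1 / q)) := by
        refine mul_le_mul_of_nonneg_left ?_ hM0
        exact Real.inner_le_Lp_mul_Lq_of_nonneg (s := t) (f := fun i => ‖Λ i x‖)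
          (g := fun i => ‖Θ i g‖) hpq (fun i _ => norm_nonneg _) (fun i _ => norm_nonneg _)
    _ ≤ M * ((BΛ * ‖x‖) * (∑ i ∈ t, ‖Θ i g‖ ^ q) ^ (1 / q)) := by
        refine mul_le_mul_of_nonneg_left (mul_le_mul_of_nonneg_right ?_ hΘnn) hM0
        calc (∑ i ∈ t, ‖Λ i x‖ ^ p) ^ (1 / p)
            ≤ (∑' i, ‖Λ i x‖ ^ p) ^ (1 / p) := by
              refine Real.rpow_le_rpow
                (Finset.sum_nonneg fun i _ => Real.rpow_nonneg (norm_nonneg _) _)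
                (Summable.sum_le_tsum t (fun i _ => Real.rpow_nonneg (norm_nonneg _) _) (hΛ x).1)
                (by positivity)
          _ ≤ BΛ * ‖x‖ := (hΛ x).2
    _ = M * BΛ * (∑ i ∈ t, ‖Θ i g‖ ^ q) ^ (1 / q) * ‖x‖ := by ring

/-- Key lemma: summability and the norm bound for a bounded symbol. -/
lemma multiplier_key [CompleteSpace X₂]
    {p q : ℝ} (hpq : p.HolderConjugate q)
    (Λ : ∀ i, X₂ →L[ℝ] Y i) (Θ : ∀ i, StrongDual ℝ X₁ →L[ℝ] StrongDual ℝ (Y i))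
    {BΛ BΘ : ℝ} (hBΛ : 0 ≤ BΛ)
    (hΛ : ∀ x : X₂, Summable (fun i => ‖Λ i x‖ ^ p) ∧
      (∑' i, ‖Λ i x‖ ^ p) ^ (1 / p) ≤ BΛ * ‖x‖)
    (g : StrongDual ℝ X₁)
    (hΘg : Summable (fun i => ‖Θ i g‖ ^ q) ∧
      (∑' i, ‖Θ i g‖ ^ q) ^ (1 / q) ≤ BΘ * ‖g‖)
    (c : ℕ → ℝ) {M : ℝ} (hM : ∀ i, |c i| ≤ M) :
    Summable (fun i => c i • opAdj (Λ i) (Θ i g)) ∧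
      ‖∑' i, c i • opAdj (Λ i) (Θ i g)‖ ≤ M * BΛ * BΘ * ‖g‖ := by
  have hM0 : 0 ≤ M := (abs_nonneg _).trans (hM 0)
  have hq0 : 0 < q := hpq.symm.pos
  have hKpos : (0:ℝ) < M * BΛ + 1 := by positivity
  have hsum : Summable (fun i => c i • opAdj (Λ i) (Θ i g)) := by
    rw [summable_iff_vanishing_norm]
    intro ε hε
    set ε' := ε / (M * BΛ + 1) with hε'def
    have hε'pos : 0 < ε' := div_pos hε hKpos
    obtain ⟨s, hs⟩ := summable_iff_vanishing_norm.1 hΘg.1 (ε' ^ q)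
      (Real.rpow_pos_of_pos hε'pos q)
    refine ⟨s, fun t ht => ?_⟩
    have h1 : ∑ i ∈ t, ‖Θ i g‖ ^ q < ε' ^ q := by
      have h := hs t ht
      rwa [Real.norm_eq_abs,
        abs_of_nonneg (Finset.sum_nonneg fun i _ => Real.rpow_nonneg (norm_nonneg _) _)] at h
    have h2 : (∑ i ∈ t, ‖Θ i g‖ ^ q) ^ (1 / q) ≤ ε' := by
      calc (∑ i ∈ t, ‖Θ i g‖ ^ q) ^ (1 / q)
          ≤ (ε' ^ q) ^ (1 / q) := by
            refine Real.rpow_le_rpow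
              (Finset.sum_nonneg fun i _ => Real.rpow_nonneg (norm_nonneg _) _)
              h1.le (by positivity)
        _ = ε' := by rw [one_div, Real.rpow_rpow_inv hε'pos.le hq0.ne']
    calc ‖∑ i ∈ t, c i • opAdj (Λ i) (Θ i g)‖
        ≤ M * BΛ * (∑ i ∈ t, ‖Θ i g‖ ^ q) ^ (1 / q) :=
          multiplier_finsum_bound hpq Λ Θ hBΛ hΛ g c hM t
      _ ≤ M * BΛ * ε' := mul_le_mul_of_nonneg_left h2 (by positivity)
      _ < (M * BΛ + 1) * ε' := mul_lt_mul_of_pos_right (lt_add_one _) hε'pos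
      _ = ε := by rw [hε'def]; field_simp
  refine ⟨hsum, ?_⟩
  refine le_of_tendsto hsum.hasSum.norm (Filter.Eventually.of_forall fun s => ?_)
  calc ‖∑ i ∈ s, c i • opAdj (Λ i) (Θ i g)‖
      ≤ M * BΛ * (∑ i ∈ s, ‖Θ i g‖ ^ q) ^ (1 / q) :=
        multiplier_finsum_bound hpq Λ Θ hBΛ hΛ g c hM s
    _ ≤ M * BΛ * ((∑' i, ‖Θ i g‖ ^ q) ^ (1 / q)) := by
        refine mul_le_mul_of_nonneg_left ?_ (by positivity)
        refine Real.rpow_le_rpow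
          (Finset.sum_nonneg fun i _ => Real.rpow_nonneg (norm_nonneg _) _)
          (Summable.sum_le_tsum s (fun i _ => Real.rpow_nonneg (norm_nonneg _) _) hΘg.1)
          (by positivity)
    _ ≤ M * BΛ * (BΘ * ‖g‖) := mul_le_mul_of_nonneg_left hΘg.2 (by positivity)
    _ = M * BΛ * BΘ * ‖g‖ := by ring

end Aux

/-- if `‖m⁽ⁿ⁾ − m‖_{p₁} → 0` then
`‖M_{m⁽ⁿ⁾,Λ,Θ} − M_{m,Λ,Θ}‖ ≤ B_Λ B_Θ ‖m⁽ⁿ⁾ − m‖_{p₁} → 0`. -/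
theorem multiplier_continuous_in_symbol
    {X₁ X₂ : Type*} [NormedAddCommGroup X₁] [NormedSpace ℝ X₁] [CompleteSpace X₁]
    [NormedAddCommGroup X₂] [NormedSpace ℝ X₂] [CompleteSpace X₂]
    {Y : ℕ → Type*} [∀ i, NormedAddCommGroup (Y i)] [∀ i, NormedSpace ℝ (Y i)]
    [∀ i, CompleteSpace (Y i)]
    (hreflX₁ : Function.Surjective (inclusionInDoubleDual ℝ X₁))
    (hreflX₂ : Function.Surjective (inclusionInDoubleDual ℝ X₂))
    (hreflY : ∀ i, Function.Surjective (inclusionInDoubleDual ℝ (Y i)))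
    (p q : ℝ) (hp : 1 < p) (hpq : 1 / p + 1 / q = 1)
    (p₁ q₁ : ℝ) (hp₁ : 1 < p₁) (hpq₁ : 1 / p₁ + 1 / q₁ = 1)
    (Λ : ∀ i, X₂ →L[ℝ] Y i) (Θ : ∀ i, StrongDual ℝ X₁ →L[ℝ] StrongDual ℝ (Y i))
    (BΛ BΘ : ℝ) (hBΛ : 0 < BΛ) (hBΘ : 0 < BΘ)
    (hΛ : ∀ x : X₂, Summable (fun i => ‖Λ i x‖ ^ p) ∧
      (∑' i, ‖Λ i x‖ ^ p) ^ (1 / p) ≤ BΛ * ‖x‖)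
    (hΘ : ∀ g : StrongDual ℝ X₁, Summable (fun i => ‖Θ i g‖ ^ q) ∧
      (∑' i, ‖Θ i g‖ ^ q) ^ (1 / q) ≤ BΘ * ‖g‖)
    (m : ℕ → ℝ) (mn : ℕ → ℕ → ℝ)
    (hm : ∃ M, ∀ i, |m i| ≤ M) (hmn : ∀ n, ∃ M, ∀ i, |mn n i| ≤ M)
    (hdiffsum : ∀ n, Summable (fun i => |mn n i - m i| ^ p₁))
    (hconv : Tendsto (fun n => (∑' i, |mn n i - m i| ^ p₁) ^ (1 / p₁))
      atTop (nhds 0)) :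
    -- the explicit bound `‖M_{m⁽ⁿ⁾,Λ,Θ} − M_{m,Λ,Θ}‖ ≤ B_Λ B_Θ ‖m⁽ⁿ⁾ − m‖_{p₁}`
    (∀ (n : ℕ) (g : StrongDual ℝ X₁),
      Summable (fun i => mn n i • opAdj (Λ i) (Θ i g)) ∧
      Summable (fun i => m i • opAdj (Λ i) (Θ i g)) ∧
      ‖(∑' i, mn n i • opAdj (Λ i) (Θ i g)) - ∑' i, m i • opAdj (Λ i) (Θ i g)‖ ≤
        BΛ * BΘ * (∑' i, |mn n i - m i| ^ p₁) ^ (1 / p₁) * ‖g‖) ∧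
    -- hence `‖M_{m⁽ⁿ⁾,Λ,Θ} − M_{m,Λ,Θ}‖ → 0`
    (∃ C : ℕ → ℝ, Tendsto C atTop (nhds 0) ∧
      ∀ (n : ℕ) (g : StrongDual ℝ X₁),
        ‖(∑' i, mn n i • opAdj (Λ i) (Θ i g)) - ∑' i, m i • opAdj (Λ i) (Θ i g)‖ ≤
          C n * ‖g‖) := by
  have hpq' : p.HolderConjugate q := Real.holderConjugate_iff.mpr ⟨hp, by simpa [one_div] using hpq⟩
  have hp₁pos : 0 < p₁ := lt_trans zero_lt_one hp₁
  -- the ℓ^{p₁} norm of the difference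
  set D : ℕ → ℝ := fun n => (∑' i, |mn n i - m i| ^ p₁) ^ (1 / p₁) with hD
  have hDbound : ∀ n i, |mn n i - m i| ≤ D n := by
    intro n i
    have h1 : |mn n i - m i| ^ p₁ ≤ ∑' j, |mn n j - m j| ^ p₁ :=
      Summable.le_tsum (hdiffsum n) i (fun j _ => Real.rpow_nonneg (abs_nonneg _) _)
    have h2 : (|mn n i - m i| ^ p₁) ^ (1 / p₁) ≤ D n := by
      refine Real.rpow_le_rpow (Real.rpow_nonneg (abs_nonneg _) _) h1 (by positivity)
    rwa [one_div, Real.rpow_rpow_inv (abs_nonneg _) hp₁pos.ne'] at h2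
  have main : ∀ (n : ℕ) (g : StrongDual ℝ X₁),
      Summable (fun i => mn n i • opAdj (Λ i) (Θ i g)) ∧
      Summable (fun i => m i • opAdj (Λ i) (Θ i g)) ∧
      ‖(∑' i, mn n i • opAdj (Λ i) (Θ i g)) - ∑' i, m i • opAdj (Λ i) (Θ i g)‖ ≤
        BΛ * BΘ * D n * ‖g‖ := by
    intro n g
    obtain ⟨M₁, hM₁⟩ := hmn n
    obtain ⟨M₂, hM₂⟩ := hm
    have k₁ := multiplier_key hpq' Λ Θ hBΛ.le hΛ g (hΘ g) (mn n) hM₁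
    have k₂ := multiplier_key hpq' Λ Θ hBΛ.le hΛ g (hΘ g) m hM₂
    have k₃ := multiplier_key hpq' Λ Θ hBΛ.le hΛ g (hΘ g)
      (fun i => mn n i - m i) (hDbound n)
    refine ⟨k₁.1, k₂.1, ?_⟩
    have hsub : (∑' i, mn n i • opAdj (Λ i) (Θ i g)) - ∑' i, m i • opAdj (Λ i) (Θ i g)
        = ∑' i, (mn n i - m i) • opAdj (Λ i) (Θ i g) := by
      rw [← Summable.tsum_sub k₁.1 k₂.1]
      exact tsum_congr fun i => (sub_smul (mn n i) (m i) _).symm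
    rw [hsub]
    calc ‖∑' i, (mn n i - m i) • opAdj (Λ i) (Θ i g)‖
        ≤ D n * BΛ * BΘ * ‖g‖ := k₃.2
      _ = BΛ * BΘ * D n * ‖g‖ := by ring
  refine ⟨main, ⟨fun n => BΛ * BΘ * D n, ?_, fun n g => ?_⟩⟩
  · have h0 := hconv.const_mul (BΛ * BΘ)
    rw [mul_zero] at h0
    exact h0
  · exact (main n g).2.2
end

section
/- Let Λ be a pg-Bessel sequence for X₂ with bound B_Λ, Θ a qg-Bessel sequence for X₁^*, and m ∈ ℓ^{p₁} for p₁ > 1 with conjugate q₁. If Θ^(n) are qg-Bessel sequences with (Σ_i ‖Θ^(n)_i − Θ_i‖^{q₁})^{1/q₁} → 0, then ‖M_{m,Λ,Θ^(n)} − M_{m,Λ,Θ}‖ ≤ B_Λ ‖m‖_{p₁} (Σ_i ‖Θ^(n)_i − Θ_i‖^{q₁})^{1/q₁} → 0 as n → ∞. -/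
open NormedSpace Filter

lemma opAdj_apply' {X Y : Type*} [NormedAddCommGroup X] [NormedSpace ℝ X]
    [NormedAddCommGroup Y] [NormedSpace ℝ Y] (T : X →L[ℝ] Y) (f : StrongDual ℝ Y) (x : X) :
    opAdj T f x = f (T x) := rfl

set_option maxHeartbeats 2000000 in
/-- if `m ∈ ℓ^{p₁}` and the qg-Bessel sequences `Θ⁽ⁿ⁾` converge to `Θ`
in the `ℓ^{q₁}` sense, then
`‖M_{m,Λ,Θ⁽ⁿ⁾} − M_{m,Λ,Θ}‖ ≤ B_Λ ‖m‖_{p₁} (Σᵢ‖Θ⁽ⁿ⁾ᵢ − Θᵢ‖^{q₁})^{1/q₁} → 0`. -/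
theorem multiplier_continuous_in_Theta
    {X₁ X₂ : Type*} [NormedAddCommGroup X₁] [NormedSpace ℝ X₁] [CompleteSpace X₁]
    [NormedAddCommGroup X₂] [NormedSpace ℝ X₂] [CompleteSpace X₂]
    {Y : ℕ → Type*} [∀ i, NormedAddCommGroup (Y i)] [∀ i, NormedSpace ℝ (Y i)]
    [∀ i, CompleteSpace (Y i)]
    (hreflX₁ : Function.Surjective (inclusionInDoubleDual ℝ X₁))
    (hreflX₂ : Function.Surjective (inclusionInDoubleDual ℝ X₂))
    (hreflY : ∀ i, Function.Surjective (inclusionInDoubleDual ℝ (Y i)))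
    (p q : ℝ) (hp : 1 < p) (hpq : 1 / p + 1 / q = 1)
    (p₁ q₁ : ℝ) (hp₁ : 1 < p₁) (hpq₁ : 1 / p₁ + 1 / q₁ = 1)
    (Λ : ∀ i, X₂ →L[ℝ] Y i)
    (Θ : ∀ i, StrongDual ℝ X₁ →L[ℝ] StrongDual ℝ (Y i))
    (Θn : ℕ → ∀ i, StrongDual ℝ X₁ →L[ℝ] StrongDual ℝ (Y i))
    (BΛ : ℝ) (hBΛ : 0 < BΛ)
    (hΛ : ∀ x : X₂, Summable (fun i => ‖Λ i x‖ ^ p) ∧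
      (∑' i, ‖Λ i x‖ ^ p) ^ (1 / p) ≤ BΛ * ‖x‖)
    (hΘ : ∃ B > (0 : ℝ), ∀ g : StrongDual ℝ X₁, Summable (fun i => ‖Θ i g‖ ^ q) ∧
      (∑' i, ‖Θ i g‖ ^ q) ^ (1 / q) ≤ B * ‖g‖)
    (hΘn : ∀ n, ∃ B > (0 : ℝ), ∀ g : StrongDual ℝ X₁,
      Summable (fun i => ‖Θn n i g‖ ^ q) ∧
      (∑' i, ‖Θn n i g‖ ^ q) ^ (1 / q) ≤ B * ‖g‖)
    (m : ℕ → ℝ) (hm : Summable (fun i => |m i| ^ p₁))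
    (hdiffsum : ∀ n, Summable (fun i => ‖Θn n i - Θ i‖ ^ q₁))
    (hconv : Tendsto (fun n => (∑' i, ‖Θn n i - Θ i‖ ^ q₁) ^ (1 / q₁))
      atTop (nhds 0)) :
    (∀ (n : ℕ) (g : StrongDual ℝ X₁),
      Summable (fun i => m i • opAdj (Λ i) (Θn n i g)) ∧
      Summable (fun i => m i • opAdj (Λ i) (Θ i g)) ∧
      ‖(∑' i, m i • opAdj (Λ i) (Θn n i g)) - ∑' i, m i • opAdj (Λ i) (Θ i g)‖ ≤
        BΛ * (∑' i, |m i| ^ p₁) ^ (1 / p₁) *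
          (∑' i, ‖Θn n i - Θ i‖ ^ q₁) ^ (1 / q₁) * ‖g‖) ∧
    (∃ C : ℕ → ℝ, Tendsto C atTop (nhds 0) ∧
      ∀ (n : ℕ) (g : StrongDual ℝ X₁),
        ‖(∑' i, m i • opAdj (Λ i) (Θn n i g)) - ∑' i, m i • opAdj (Λ i) (Θ i g)‖ ≤
          C n * ‖g‖) := by
  have hcpq : Real.HolderConjugate p q := Real.holderConjugate_iff.mpr ⟨hp, by rw [← one_div, ← one_div]; exact hpq⟩
  have hcpq₁ : Real.HolderConjugate p₁ q₁ := Real.holderConjugate_iff.mpr ⟨hp₁, by rw [← one_div, ← one_div]; exact hpq₁⟩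
  have hp0 : (0:ℝ) < p := hcpq.pos
  have hq0 : (0:ℝ) < q := hcpq.symm.pos
  have hp₁0 : (0:ℝ) < p₁ := hcpq₁.pos
  have hq₁0 : (0:ℝ) < q₁ := hcpq₁.symm.pos
  -- uniform bound on Λ
  have hΛb : ∀ (i : ℕ) (x : X₂), ‖Λ i x‖ ≤ BΛ * ‖x‖ := by
    intro i x
    have h1 : ‖Λ i x‖ ^ p ≤ ∑' j, ‖Λ j x‖ ^ p :=
      Summable.le_tsum (hΛ x).1 i fun j _ => Real.rpow_nonneg (norm_nonneg _) p
    calc ‖Λ i x‖ = (‖Λ i x‖ ^ p) ^ (1/p) := by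
          rw [one_div, Real.rpow_rpow_inv (norm_nonneg _) hp0.ne']
      _ ≤ (∑' j, ‖Λ j x‖ ^ p) ^ (1/p) :=
          Real.rpow_le_rpow (Real.rpow_nonneg (norm_nonneg _) p) h1
            (le_of_lt (by positivity))
      _ ≤ BΛ * ‖x‖ := (hΛ x).2
  -- bound on the adjoint
  have hAdj : ∀ (i : ℕ) (f : StrongDual ℝ (Y i)), ‖opAdj (Λ i) f‖ ≤ BΛ * ‖f‖ := by
    intro i f
    refine ContinuousLinearMap.opNorm_le_bound _
      (mul_nonneg hBΛ.le (norm_nonneg _)) fun x => ?_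
    rw [opAdj_apply']
    calc ‖f (Λ i x)‖ ≤ ‖f‖ * ‖Λ i x‖ := f.le_opNorm _
      _ ≤ ‖f‖ * (BΛ * ‖x‖) := by
          exact mul_le_mul_of_nonneg_left (hΛb i x) (norm_nonneg _)
      _ = BΛ * ‖f‖ * ‖x‖ := by ring
  -- |m| tends to zero
  have hmabs : Tendsto (fun i => |m i|) atTop (nhds 0) := by
    have h0 : Tendsto (fun i => |m i| ^ p₁) atTop (nhds 0) := hm.tendsto_atTop_zero
    have hcont : Tendsto (fun y : ℝ => y ^ (1/p₁)) (nhds 0) (nhds 0) := by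
      have h := (Real.continuousAt_rpow_const 0 (1/p₁)
        (Or.inr (le_of_lt (by positivity)))).tendsto
      simpa only [Real.zero_rpow (one_div_ne_zero hp₁0.ne')] using h
    have h2 := hcont.comp h0
    exact h2.congr fun i => by
      show (|m i| ^ p₁) ^ (1/p₁) = |m i|
      rw [one_div, Real.rpow_rpow_inv (abs_nonneg _) hp₁0.ne']
  -- generic summability of the multiplier series
  have key : ∀ (φ : ∀ i, StrongDual ℝ (Y i)) (B : ℝ), 0 ≤ B →
      (∀ t : Finset ℕ, (∑ i ∈ t, ‖φ i‖ ^ q) ^ (1/q) ≤ B) →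
      Summable (fun i => m i • opAdj (Λ i) (φ i)) := by
    intro φ B hB0 hB
    rw [summable_iff_vanishing_norm]
    intro ε hε
    have hd : (0:ℝ) < B * BΛ + 1 := by nlinarith
    set δ : ℝ := ε / (B * BΛ + 1) with hδ
    have hδpos : 0 < δ := div_pos hε hd
    obtain ⟨N, hN⟩ := (Metric.tendsto_atTop.1 hmabs) δ hδpos
    refine ⟨Finset.range N, fun t ht => ?_⟩
    have hbound : ‖∑ i ∈ t, m i • opAdj (Λ i) (φ i)‖ ≤ δ * (B * BΛ) := by
      refine ContinuousLinearMap.opNorm_le_bound _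
        (by positivity) fun x => ?_
      have hx : ‖(∑ i ∈ t, m i • opAdj (Λ i) (φ i)) x‖ ≤
          ∑ i ∈ t, |m i| * (‖φ i‖ * ‖Λ i x‖) := by
        rw [ContinuousLinearMap.sum_apply]
        refine (norm_sum_le _ _).trans (Finset.sum_le_sum fun i _ => ?_)
        rw [ContinuousLinearMap.smul_apply, opAdj_apply', norm_smul, Real.norm_eq_abs]
        exact mul_le_mul_of_nonneg_left ((φ i).le_opNorm _) (abs_nonneg _)
      have h2 : ∑ i ∈ t, |m i| * (‖φ i‖ * ‖Λ i x‖) ≤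
          δ * ∑ i ∈ t, ‖φ i‖ * ‖Λ i x‖ := by
        rw [Finset.mul_sum]
        refine Finset.sum_le_sum fun i hi => ?_
        have hiN : N ≤ i := by
          by_contra hlt
          exact (Finset.disjoint_left.1 ht hi)
            (Finset.mem_range.2 (lt_of_not_ge hlt))
        have hmi : |m i| ≤ δ := by
          have h := hN i hiN
          rw [Real.dist_eq, sub_zero, abs_abs] at h
          exact h.le
        exact mul_le_mul_of_nonneg_right hmi
          (mul_nonneg (norm_nonneg _) (norm_nonneg _))
      have h3 : ∑ i ∈ t, ‖φ i‖ * ‖Λ i x‖ ≤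
          (∑ i ∈ t, ‖φ i‖ ^ q) ^ (1/q) * (∑ i ∈ t, ‖Λ i x‖ ^ p) ^ (1/p) :=
        Real.inner_le_Lp_mul_Lq_of_nonneg t hcpq.symm
          (fun i _ => norm_nonneg _) (fun i _ => norm_nonneg _)
      have h5 : (∑ i ∈ t, ‖Λ i x‖ ^ p) ^ (1/p) ≤ BΛ * ‖x‖ := by
        refine le_trans (Real.rpow_le_rpow
          (Finset.sum_nonneg fun i _ => Real.rpow_nonneg (norm_nonneg _) _)
          (Summable.sum_le_tsum t (fun i _ => Real.rpow_nonneg (norm_nonneg _) _) (hΛ x).1)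
          (le_of_lt (by positivity))) (hΛ x).2
      have h6 : (∑ i ∈ t, ‖φ i‖ ^ q) ^ (1/q) * (∑ i ∈ t, ‖Λ i x‖ ^ p) ^ (1/p) ≤
          B * (BΛ * ‖x‖) :=
        mul_le_mul (hB t) h5
          (Real.rpow_nonneg (Finset.sum_nonneg fun i _ =>
            Real.rpow_nonneg (norm_nonneg _) _) _) hB0
      calc ‖(∑ i ∈ t, m i • opAdj (Λ i) (φ i)) x‖ ≤
          ∑ i ∈ t, |m i| * (‖φ i‖ * ‖Λ i x‖) := hx
        _ ≤ δ * ∑ i ∈ t, ‖φ i‖ * ‖Λ i x‖ := h2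
        _ ≤ δ * (B * (BΛ * ‖x‖)) :=
            mul_le_mul_of_nonneg_left (h3.trans h6) hδpos.le
        _ = δ * (B * BΛ) * ‖x‖ := by ring
    calc ‖∑ i ∈ t, m i • opAdj (Λ i) (φ i)‖ ≤ δ * (B * BΛ) := hbound
      _ < δ * (B * BΛ + 1) := by nlinarith
      _ = ε := div_mul_cancel₀ _ hd.ne'
  have hsum : ∀ (φ : ∀ i, StrongDual ℝ (Y i)), Summable (fun i => ‖φ i‖ ^ q) →
      Summable (fun i => m i • opAdj (Λ i) (φ i)) := by
    intro φ hφ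
    refine key φ ((∑' i, ‖φ i‖ ^ q) ^ (1/q))
      (Real.rpow_nonneg (tsum_nonneg fun i => Real.rpow_nonneg (norm_nonneg _) _) _)
      fun t => ?_
    exact Real.rpow_le_rpow
      (Finset.sum_nonneg fun i _ => Real.rpow_nonneg (norm_nonneg _) _)
      (Summable.sum_le_tsum t (fun i _ => Real.rpow_nonneg (norm_nonneg _) _) hφ)
      (le_of_lt (by positivity))
  obtain ⟨BΘ, hBΘ, hΘ'⟩ := hΘ
  have main : ∀ (n : ℕ) (g : StrongDual ℝ X₁),
      Summable (fun i => m i • opAdj (Λ i) (Θn n i g)) ∧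
      Summable (fun i => m i • opAdj (Λ i) (Θ i g)) ∧
      ‖(∑' i, m i • opAdj (Λ i) (Θn n i g)) - ∑' i, m i • opAdj (Λ i) (Θ i g)‖ ≤
        BΛ * (∑' i, |m i| ^ p₁) ^ (1 / p₁) *
          (∑' i, ‖Θn n i - Θ i‖ ^ q₁) ^ (1 / q₁) * ‖g‖ := by
    intro n g
    obtain ⟨Bn, hBn, hΘn'⟩ := hΘn n
    have s1 : Summable (fun i => m i • opAdj (Λ i) (Θn n i g)) :=
      hsum _ (hΘn' g).1
    have s2 : Summable (fun i => m i • opAdj (Λ i) (Θ i g)) :=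
      hsum _ (hΘ' g).1
    refine ⟨s1, s2, ?_⟩
    have hmd : Summable (fun i => |m i| * ‖Θn n i - Θ i‖) :=
      Real.summable_mul_of_Lp_Lq_of_nonneg hcpq₁ (fun i => abs_nonneg _)
        (fun i => norm_nonneg (Θn n i - Θ i)) hm (hdiffsum n)
    have hDle : ∀ i, ‖m i • opAdj (Λ i) ((Θn n i - Θ i) g)‖ ≤
        |m i| * ‖Θn n i - Θ i‖ * (BΛ * ‖g‖) := by
      intro i
      rw [norm_smul, Real.norm_eq_abs]
      calc |m i| * ‖opAdj (Λ i) ((Θn n i - Θ i) g)‖ ≤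
          |m i| * (BΛ * ‖(Θn n i - Θ i) g‖) :=
            mul_le_mul_of_nonneg_left (hAdj i _) (abs_nonneg _)
        _ ≤ |m i| * (BΛ * (‖Θn n i - Θ i‖ * ‖g‖)) := by
            refine mul_le_mul_of_nonneg_left
              (mul_le_mul_of_nonneg_left ((Θn n i - Θ i).le_opNorm g) hBΛ.le)
              (abs_nonneg _)
        _ = |m i| * ‖Θn n i - Θ i‖ * (BΛ * ‖g‖) := by ring
    have hDnorm : Summable (fun i => ‖m i • opAdj (Λ i) ((Θn n i - Θ i) g)‖) :=
      Summable.of_nonneg_of_le (fun i => norm_nonneg _) hDle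
        (hmd.mul_right (BΛ * ‖g‖))
    have hts : ∑' i, m i • opAdj (Λ i) ((Θn n i - Θ i) g) =
        (∑' i, m i • opAdj (Λ i) (Θn n i g)) - ∑' i, m i • opAdj (Λ i) (Θ i g) := by
      rw [← Summable.tsum_sub s1 s2]
      exact tsum_congr fun i => by
        rw [ContinuousLinearMap.sub_apply, map_sub, smul_sub]
    rw [← hts]
    calc ‖∑' i, m i • opAdj (Λ i) ((Θn n i - Θ i) g)‖ ≤
        ∑' i, ‖m i • opAdj (Λ i) ((Θn n i - Θ i) g)‖ := norm_tsum_le_tsum_norm hDnorm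
      _ ≤ ∑' i, |m i| * ‖Θn n i - Θ i‖ * (BΛ * ‖g‖) :=
          Summable.tsum_le_tsum hDle hDnorm (hmd.mul_right _)
      _ = (∑' i, |m i| * ‖Θn n i - Θ i‖) * (BΛ * ‖g‖) := tsum_mul_right
      _ ≤ ((∑' i, |m i| ^ p₁) ^ (1/p₁) * (∑' i, ‖Θn n i - Θ i‖ ^ q₁) ^ (1/q₁)) *
          (BΛ * ‖g‖) :=
          mul_le_mul_of_nonneg_right
            (Real.inner_le_Lp_mul_Lq_tsum_of_nonneg hcpq₁ (fun i => abs_nonneg _)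
              (fun i => norm_nonneg (Θn n i - Θ i)) hm (hdiffsum n))
            (mul_nonneg hBΛ.le (norm_nonneg _))
      _ = BΛ * (∑' i, |m i| ^ p₁) ^ (1/p₁) *
          (∑' i, ‖Θn n i - Θ i‖ ^ q₁) ^ (1/q₁) * ‖g‖ := by ring
  refine ⟨main, ⟨fun n => BΛ * (∑' i, |m i| ^ p₁) ^ (1/p₁) *
      (∑' i, ‖Θn n i - Θ i‖ ^ q₁) ^ (1/q₁), ?_, fun n g => (main n g).2.2⟩⟩
  have h := hconv.const_mul (BΛ * (∑' i, |m i| ^ p₁) ^ (1/p₁))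
  simpa [mul_assoc, mul_zero] using h
end

section
/- If Λ = {Λ_i ∈ B(X, Y_i)} satisfies the qg-Riesz basis finite-sum condition (ii), then Σ_i Λ_i^* g_i converges unconditionally in X^* for every {g_i} ∈ (Σ_i ⊕ Y_i^*)_{ℓ^q}, and A(Σ_i ‖g_i‖^q)^{1/q} ≤ ‖Σ_i Λ_i^* g_i‖ ≤ B(Σ_i ‖g_i‖^q)^{1/q} holds for the full (infinite) sums. -/
open NormedSpace Filter

/-- if `Λ` satisfies the qg-Riesz finite-sum condition (ii), then for
every `{gᵢ} ∈ (Σᵢ ⊕ Yᵢ*)_{ℓᑫ}` the series `Σᵢ Λᵢ* gᵢ` converges unconditionally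
(is summable) in `X*` and the two-sided inequality
`A (Σᵢ‖gᵢ‖^q)^{1/q} ≤ ‖Σᵢ Λᵢ* gᵢ‖ ≤ B (Σᵢ‖gᵢ‖^q)^{1/q}` holds for the full sums. -/
theorem qgRiesz_condition_infinite_sums
    {X : Type*} [NormedAddCommGroup X] [NormedSpace ℝ X] [CompleteSpace X]
    {Y : ℕ → Type*} [∀ i, NormedAddCommGroup (Y i)] [∀ i, NormedSpace ℝ (Y i)]
    [∀ i, CompleteSpace (Y i)]
    (q : ℝ) (hq : 1 < q)
    (Λ : ∀ i, X →L[ℝ] Y i) (A B : ℝ) (hA : 0 < A) (hB : 0 < B)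
    (hriesz : ∀ (s : Finset ℕ) (g : ∀ i, StrongDual ℝ (Y i)),
      A * (∑ i ∈ s, ‖g i‖ ^ q) ^ (1 / q) ≤ ‖∑ i ∈ s, opAdj (Λ i) (g i)‖ ∧
      ‖∑ i ∈ s, opAdj (Λ i) (g i)‖ ≤ B * (∑ i ∈ s, ‖g i‖ ^ q) ^ (1 / q)) :
    ∀ g : ∀ i, StrongDual ℝ (Y i), Summable (fun i => ‖g i‖ ^ q) →
      Summable (fun i => opAdj (Λ i) (g i)) ∧
      A * (∑' i, ‖g i‖ ^ q) ^ (1 / q) ≤ ‖∑' i, opAdj (Λ i) (g i)‖ ∧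
      ‖∑' i, opAdj (Λ i) (g i)‖ ≤ B * (∑' i, ‖g i‖ ^ q) ^ (1 / q) := by
  intro g hgq
  have hq0 : 0 < q := lt_trans one_pos hq
  have hinv : 0 < 1 / q := by positivity
  -- summability
  have hsum : Summable (fun i => opAdj (Λ i) (g i)) := by
    rw [summable_iff_vanishing_norm]
    intro ε hε
    obtain ⟨s, hs⟩ := summable_iff_vanishing_norm.1 hgq ((ε / B) ^ q) (by positivity)
    refine ⟨s, fun t ht => ?_⟩
    have h1 := (hriesz t g).2
    have h2 := hs t ht
    have hnn : (0:ℝ) ≤ ∑ i ∈ t, ‖g i‖ ^ q :=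
      Finset.sum_nonneg fun i _ => Real.rpow_nonneg (norm_nonneg _) _
    have h3 : (∑ i ∈ t, ‖g i‖ ^ q) ^ (1/q) < ε / B := by
      have := Real.rpow_lt_rpow hnn (lt_of_abs_lt h2) hinv
      rwa [← Real.rpow_mul (by positivity), mul_one_div_cancel (ne_of_gt hq0),
        Real.rpow_one] at this
    calc ‖∑ i ∈ t, opAdj (Λ i) (g i)‖ ≤ B * (∑ i ∈ t, ‖g i‖ ^ q) ^ (1/q) := h1
      _ < B * (ε / B) := by exact mul_lt_mul_of_pos_left h3 hB
      _ = ε := by field_simp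
  refine ⟨hsum, ?_⟩
  -- limits
  have hT1 : Tendsto (fun s : Finset ℕ => ‖∑ i ∈ s, opAdj (Λ i) (g i)‖) atTop
      (nhds ‖∑' i, opAdj (Λ i) (g i)‖) :=
    (continuous_norm.tendsto _).comp hsum.hasSum
  have htg : Tendsto (fun s : Finset ℕ => ∑ i ∈ s, ‖g i‖ ^ q) atTop
      (nhds (∑' i, ‖g i‖ ^ q)) := hgq.hasSum
  have hcont : ContinuousAt (fun x : ℝ => x ^ (1/q)) (∑' i, ‖g i‖ ^ q) :=
    Real.continuousAt_rpow_const _ _ (Or.inr hinv.le)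
  have hT2 : Tendsto (fun s : Finset ℕ => (∑ i ∈ s, ‖g i‖ ^ q) ^ (1/q)) atTop
      (nhds ((∑' i, ‖g i‖ ^ q) ^ (1/q))) := hcont.tendsto.comp htg
  constructor
  · exact le_of_tendsto_of_tendsto' (hT2.const_mul A) hT1 (fun s => (hriesz s g).1)
  · exact le_of_tendsto_of_tendsto' hT1 (hT2.const_mul B) (fun s => (hriesz s g).2)
end
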